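/- Let m ⊆ R be a maximal ideal and g ∈ ℤ^n with σ_g(m) = m. Suppose a ∈ 𝒜(g) and a' ∈ 𝒜(−g) satisfy a'·a ∈ ι(R) \ ι(m). Then the image φ_m(a) of a in the quotient algebra A/(m) is a unit (it has a two-sided inverse in A/(m)). -/
import Mathlib


/-- The quotient map `A → A/(s)` by the two-sided ideal generated by `s`, as a
morphism of `K`-algebras. -/
def quotAlgHom {K A : Type*} [Field K] [Ring A] [Algebra K A] (s : Set A) :
    A →ₐ[K] (TwoSidedIdeal.span s).ringCon.Quotient :=
  AlgHom.mk' (TwoSidedIdeal.span s).ringCon.mk' fun _ _ => rfl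

lemma quotAlgHom_eq_zero {K A : Type*} [Field K] [Ring A] [Algebra K A] (s : Set A)
    {x : A} (hx : x ∈ s) : quotAlgHom (K := K) s x = 0 := by
  have hmem : x ∈ TwoSidedIdeal.span s := TwoSidedIdeal.subset_span hx
  have h0 : (TwoSidedIdeal.span s).ringCon x 0 := (TwoSidedIdeal.mem_iff _ _).mp hmem
  show (TwoSidedIdeal.span s).ringCon.mk' x = 0
  have h : ((x : (TwoSidedIdeal.span s).ringCon.Quotient)) = ((0 : A) : (TwoSidedIdeal.span s).ringCon.Quotient) :=
    ((TwoSidedIdeal.span s).ringCon.eq).mpr h0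
  simpa using h

/-- invertibility in Theorem `varphibmstruct1`(b): if `m` is maximal,
`σ_g(m) = m`, `a ∈ 𝒜 g`, `a' ∈ 𝒜 (−g)` and `a'·a ∈ ι(R) \ ι(m)`, then the image of
`a` in `A/(m)` is a unit. -/
theorem stmt_18 {K A R : Type*} [Field K] [Ring A] [Algebra K A]
    [CommRing R] [Algebra K R]
    (n : ℕ) (hn : 1 ≤ n)
    (𝒜 : (Fin n → ℤ) → Submodule K A)
    (hdirect : DirectSum.IsInternal 𝒜)
    (hone : (1 : A) ∈ 𝒜 0)
    (hgmul : ∀ g h : Fin n → ℤ, ∀ a ∈ 𝒜 g, ∀ b ∈ 𝒜 h, a * b ∈ 𝒜 (g + h))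
    (ι : R →ₐ[K] A) (hinj : Function.Injective ι)
    (hrange : (𝒜 0 : Set A) = Set.range ι)
    (σ : (Fin n → ℤ) → (R ≃ₐ[K] R))
    (hσ : ∀ g h : Fin n → ℤ, σ (g + h) = σ g * σ h)
    (hcomm : ∀ g : Fin n → ℤ, ∀ a ∈ 𝒜 g, ∀ r : R, a * ι r = ι (σ g r) * a)
    (m : Ideal R) (hm : m.IsMaximal)
    (g : Fin n → ℤ) (hfix : Ideal.map (σ g) m = m)
    (a : A) (ha : a ∈ 𝒜 g) (a' : A) (ha' : a' ∈ 𝒜 (-g))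
    (haa : a' * a ∈ Set.range ⇑ι \ ⇑ι '' ↑m) :
    IsUnit (quotAlgHom (K := K) (⇑ι '' ↑m) a) := by
  set φ := quotAlgHom (K := K) (⇑ι '' ↑m) with hφ
  -- φ kills ι of elements of m
  have hkill : ∀ c ∈ m, φ (ι c) = 0 := fun c hc =>
    quotAlgHom_eq_zero _ ⟨c, hc, rfl⟩
  have hcong : ∀ x y : R, x - y ∈ m → φ (ι x) = φ (ι y) := by
    intro x y hxy
    have h0 : φ (ι x) - φ (ι y) = 0 := by
      rw [← map_sub, ← map_sub]; exact hkill _ hxy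
    exact sub_eq_zero.mp h0
  -- a' * a = ι r with r ∉ m
  obtain ⟨r, hr⟩ := haa.1
  have hrm : r ∉ m := fun h => haa.2 ⟨r, h, hr⟩
  -- a * a' = ι r₂
  have haa' : a * a' ∈ 𝒜 0 := by
    have := hgmul g (-g) a ha a' ha'
    simpa using this
  obtain ⟨r₂, hr₂⟩ : ∃ r₂, ι r₂ = a * a' := by
    have : a * a' ∈ Set.range ⇑ι := hrange ▸ haa'
    exact this
  -- inverse of r mod m
  obtain ⟨s, c, hc, hsc⟩ := hm.exists_inv hrm
  -- key twisting identity
  have htwist : a * ι r = ι (σ g r) * a := hcomm g a ha r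
  have htwist_s : a * ι s = ι (σ g s) * a := hcomm g a ha s
  -- r₂ * r₂ = σ g r * r₂
  have hkey : r₂ * r₂ = σ g r * r₂ := by
    apply hinj
    have : (a * a') * (a * a') = ι (σ g r) * (a * a') := by
      calc (a * a') * (a * a') = a * (a' * a) * a' := by noncomm_ring
        _ = a * ι r * a' := by rw [hr]
        _ = ι (σ g r) * a * a' := by rw [htwist]
        _ = ι (σ g r) * (a * a') := by noncomm_ring
    rw [map_mul, map_mul, hr₂]
    exact this
  -- σ g preserves m
  have hσmem : ∀ x : R, x ∈ m → σ g x ∈ m := by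
    intro x hx
    rw [← hfix]
    exact Ideal.mem_map_of_mem _ hx
  -- left inverse : φ(ι s * a') * φ a = 1
  have hleft : φ (ι s * a') * φ a = 1 := by
    rw [← map_mul, mul_assoc, ← hr, ← map_mul]
    have h1 : s * r - 1 ∈ m := by
      have : s * r - 1 = -c := by linear_combination hsc
      rw [this]; exact m.neg_mem hc
    calc φ (ι (s * r)) = φ (ι 1) := hcong _ _ h1
      _ = 1 := by rw [map_one, map_one]
  -- right product : φ a * φ(ι s * a') = φ (ι (σ g s * r₂))
  have hright : φ a * φ (ι s * a') = φ (ι (σ g s * r₂)) := by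
    rw [← map_mul]
    congr 1
    calc a * (ι s * a') = (a * ι s) * a' := by noncomm_ring
      _ = ι (σ g s) * a * a' := by rw [htwist_s]
      _ = ι (σ g s) * (a * a') := by noncomm_ring
      _ = ι (σ g s) * ι r₂ := by rw [hr₂]
      _ = ι (σ g s * r₂) := (map_mul ι _ _).symm
  have hright1 : φ a * φ (ι s * a') = 1 := by
    -- case analysis via primality
    have hprime : m.IsPrime := hm.isPrime
    have hzero : (r₂ - σ g r) * r₂ = 0 := by linear_combination hkey
    have hmem0 : (r₂ - σ g r) * r₂ ∈ m := by rw [hzero]; exact m.zero_mem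
    rcases hprime.mem_or_mem hmem0 with h1 | h2
    · -- r₂ ≡ σ g r mod m
      rw [hright]
      have hd : σ g s * r₂ - σ g (s * r) ∈ m := by
        have : σ g s * r₂ - σ g (s * r) = σ g s * (r₂ - σ g r) := by
          rw [map_mul]; ring
        rw [this]
        exact m.mul_mem_left _ h1
      have hd2 : σ g (s * r) - 1 ∈ m := by
        have h1 : s * r - 1 ∈ m := by
          have : s * r - 1 = -c := by linear_combination hsc
          rw [this]; exact m.neg_mem hc
        have := hσmem _ h1
        simpa using this
      calc φ (ι (σ g s * r₂)) = φ (ι (σ g (s * r))) := hcong _ _ hd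
        _ = φ (ι 1) := hcong _ _ hd2
        _ = 1 := by rw [map_one, map_one]
    · -- r₂ ∈ m : quotient is trivial
      have e0 : φ a * φ (ι s * a') = 0 := by
        rw [hright]
        have : φ (ι (σ g s * r₂)) = φ (ι (σ g s)) * φ (ι r₂) := by
          rw [← map_mul (f := φ), ← map_mul]
        rw [this, hkill _ h2, mul_zero]
      have hA0 : φ a = 0 := by
        have : (φ a * φ (ι s * a')) * φ a = φ a := by
          rw [mul_assoc, hleft, mul_one]
        rw [e0, zero_mul] at this
        exact this.symm
      have h10 : (1 : (TwoSidedIdeal.span (⇑ι '' ↑m)).ringCon.Quotient) = 0 := by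
        rw [← hleft, hA0, mul_zero]
      rw [e0, h10]
  exact ⟨⟨φ a, φ (ι s * a'), hright1, hleft⟩, rfl⟩
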